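/- Assume p ≥ 3, φ₂(s̃_n; W₀) > 0, and n ≥ [200·K_theta·(K_dim + 1)/φ₂²(s̃_n; W₀)]·(max(‖X‖_max², 1))·s₀²·log p. Then for every S ∈ 𝒮_{Θ_n}: (i) ‖F_{n,θ₀}^{1/2}(θ̃*_S − θ₀)‖₂² ≤ 8·K_theta·s₀·log p; and (ii) the matrices V_{n,S} and F_{n,θ*_S} are positive definite and satisfy both λ_max(F_{n,θ*_S}^{−1/2} V_{n,S} F_{n,θ*_S}^{−1/2}) ≤ 2 and λ_max(V_{n,S}^{−1/2} F_{n,θ*_S} V_{n,S}^{−1/2}) ≤ 2. -/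

import Mathlib

open Matrix Real Finset

namespace Stmt4

variable {n p : ℕ}

/-- Linear predictor `x_iᵀθ`. -/
noncomputable def ip (x : Fin n → Fin p → ℝ) (θ : Fin p → ℝ) (i : Fin n) : ℝ :=
  ∑ j, x i j * θ j

/-- Linear predictor for a submodel, `x_{i,S}ᵀθ_S`. -/
noncomputable def ipS (x : Fin n → Fin p → ℝ) (S : Finset (Fin p)) (θs : S → ℝ) (i : Fin n) : ℝ :=
  ∑ j : S, x i j.1 * θs j

/-- `θ̃_S`: the vector `θ_S` padded with zeros outside `S`. -/
def pad (S : Finset (Fin p)) (θs : S → ℝ) : Fin p → ℝ :=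
  fun j => if h : j ∈ S then θs ⟨j, h⟩ else 0

/-- `‖F_{n,θ₀}^{1/2} θ‖₂² = ∑ᵢ b''(x_iᵀθ₀)·(x_iᵀθ)²`. -/
noncomputable def quadF (b : ℝ → ℝ) (x : Fin n → Fin p → ℝ) (θ₀ θ : Fin p → ℝ) : ℝ :=
  ∑ i, deriv (deriv b) (ip x θ₀ i) * (ip x θ i) ^ 2

/-- The matrix `V_{n,S} = ∑ᵢ b''(x_iᵀθ₀)·x_{i,S} x_{i,S}ᵀ`. -/
noncomputable def Vmat (b : ℝ → ℝ) (x : Fin n → Fin p → ℝ) (θ₀ : Fin p → ℝ)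
    (S : Finset (Fin p)) : Matrix S S ℝ :=
  Matrix.of fun j k => ∑ i, deriv (deriv b) (ip x θ₀ i) * x i j.1 * x i k.1

/-- The Fisher matrix `F_{n,θ_S} = ∑ᵢ b''(x_{i,S}ᵀθ_S)·x_{i,S} x_{i,S}ᵀ`. -/
noncomputable def Fmat (b : ℝ → ℝ) (x : Fin n → Fin p → ℝ) (S : Finset (Fin p))
    (θs : S → ℝ) : Matrix S S ℝ :=
  Matrix.of fun j k => ∑ i, deriv (deriv b) (ipS x S θs i) * x i j.1 * x i k.1

/-- Sparse singular value `φ₂²(s; W₀)`, with real sparsity level `s`. -/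
noncomputable def phi2sq (b : ℝ → ℝ) (x : Fin n → Fin p → ℝ) (θ₀ : Fin p → ℝ) (s : ℝ) : ℝ :=
  sInf {r : ℝ | ∃ θ : Fin p → ℝ, θ ≠ 0 ∧
    ((Finset.univ.filter fun j => θ j ≠ 0).card : ℝ) ≤ s ∧
    r = quadF b x θ₀ θ / ((n : ℝ) * ∑ j, θ j ^ 2)}

/-- `‖X‖_max = max_{i,j} |x_{ij}|`. -/
noncomputable def Xmax (x : Fin n → Fin p → ℝ) : ℝ :=
  ⨆ i : Fin n, ⨆ j : Fin p, |x i j|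

/-- Largest eigenvalue of a symmetric real matrix (Rayleigh quotient supremum). -/
noncomputable def lamMax {m : Type*} [Fintype m] (A : Matrix m m ℝ) : ℝ :=
  sSup {r : ℝ | ∃ u : m → ℝ, (∑ i, u i ^ 2) = 1 ∧ r = u ⬝ᵥ A.mulVec u}

/-- The expected log-likelihood of the submodel `S`. -/
noncomputable def elik (b : ℝ → ℝ) (x : Fin n → Fin p → ℝ) (θ₀ : Fin p → ℝ)
    (S : Finset (Fin p)) (θs : S → ℝ) : ℝ :=
  ∑ i, (deriv b (ip x θ₀ i) * ipS x S θs i - b (ipS x S θs i))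

/-- Membership in `𝒮_{Θ_n}`. -/
noncomputable def inSTheta (b : ℝ → ℝ) (x : Fin n → Fin p → ℝ) (θ₀ : Fin p → ℝ)
    (Kdim Ktheta : ℝ) (S : Finset (Fin p)) : Prop :=
  S.Nonempty ∧
  (S.card : ℝ) ≤ Kdim * ((Finset.univ.filter fun j => θ₀ j ≠ 0).card : ℝ) ∧
  ∃ θs : S → ℝ, quadF b x θ₀ (fun j => pad S θs j - θ₀ j)
    ≤ Ktheta * ((Finset.univ.filter fun j => θ₀ j ≠ 0).card : ℝ) * Real.log p

end Stmt4

open Stmt4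


namespace Stmt4Aux

open Stmt4 Real Set

variable {b : ℝ → ℝ}

lemma diff2 (hb3 : ContDiff ℝ 3 b) : Differentiable ℝ (deriv b) := by
  have h3 : ContDiff ℝ ((2 : ℕ) + 1) b := by exact_mod_cast hb3
  have h := (contDiff_succ_iff_deriv.mp h3).2.2
  exact h.differentiable (by norm_num)

lemma cont2 (hb3 : ContDiff ℝ 3 b) : Continuous (deriv b) :=
  (diff2 hb3).continuous

/-- Bregman divergence representation via two mean value theorems. -/
lemma bregman_rep (hb3 : ContDiff ℝ 3 b) (η₀ η : ℝ) :
    ∃ d, |d - η₀| ≤ |η - η₀| ∧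
      b η - b η₀ - deriv b η₀ * (η - η₀) = deriv (deriv b) d * (η - η₀) ^ 2 / 2 := by
  have hb1 : Differentiable ℝ b := hb3.differentiable (by norm_num)
  have hb2 : Differentiable ℝ (deriv b) := diff2 hb3
  set f : ℝ → ℝ := fun u => b u - b η₀ - deriv b η₀ * (u - η₀) with hf
  set f' : ℝ → ℝ := fun u => deriv b u - deriv b η₀ with hf'
  set g : ℝ → ℝ := fun u => (u - η₀) ^ 2 with hg
  set g' : ℝ → ℝ := fun u => 2 * (u - η₀) with hg'
  have hfd : ∀ u : ℝ, HasDerivAt f (f' u) u := by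
    intro u
    have h1 : HasDerivAt (fun u : ℝ => b u) (deriv b u) u := (hb1 u).hasDerivAt
    have h2 : HasDerivAt (fun u : ℝ => deriv b η₀ * (u - η₀)) (deriv b η₀ * 1) u :=
      ((hasDerivAt_id u).sub_const η₀).const_mul _
    have := (h1.sub_const (b η₀)).sub h2
    rw [mul_one] at this; exact this
  have hgd : ∀ u : ℝ, HasDerivAt g (g' u) u := by
    intro u
    have := ((hasDerivAt_id u).sub_const η₀).fun_pow 2
    simpa [hg, hg', mul_comm] using this
  rcases lt_trichotomy η η₀ with hlt | heq | hgt
  · obtain ⟨c, hc, hceq⟩ := exists_ratio_hasDerivAt_eq_ratio_slope f f' hlt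
      (Continuous.continuousOn (by fun_prop)) (fun u _ => hfd u) g g'
      (Continuous.continuousOn (by fun_prop)) (fun u _ => hgd u)
    have hfη0 : f η₀ = 0 := by simp [hf]
    have hgη0 : g η₀ = 0 := by simp [hg]
    have hceq' : g η * (deriv b c - deriv b η₀) = f η * (2 * (c - η₀)) := by
      simp only [hfη0, hgη0, hf', hg', zero_sub, neg_mul] at hceq
      linarith [hceq]
    have hcη0 : c < η₀ := hc.2
    obtain ⟨d, hd, hdeq⟩ := exists_hasDerivAt_eq_slope (deriv b) (deriv (deriv b)) hcη0
      (Continuous.continuousOn (cont2 hb3)) (fun u _ => (hb2 u).hasDerivAt)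
    refine ⟨d, ?_, ?_⟩
    · have h1 : η < d := lt_trans hc.1 hd.1
      have h2 : d < η₀ := hd.2
      rw [abs_of_neg (by linarith), abs_of_neg (by linarith)]
      linarith
    · have hcne : c - η₀ ≠ 0 := sub_ne_zero.mpr (ne_of_lt hcη0)
      have hne : η₀ - c ≠ 0 := sub_ne_zero.mpr (ne_of_gt hcη0)
      have hbc : deriv b c - deriv b η₀ = deriv (deriv b) d * (c - η₀) := by
        have h := (eq_div_iff hne).mp hdeq
        linear_combination h
      rw [hbc] at hceq'
      have h2 : (g η * deriv (deriv b) d) * (c - η₀) = (f η * 2) * (c - η₀) := by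
        linear_combination hceq'
      have hcancel := mul_right_cancel₀ hcne h2
      simp only [hf, hg] at hcancel ⊢
      linear_combination -hcancel / 2
  · exact ⟨η₀, by simp [heq], by simp [heq]⟩
  · obtain ⟨c, hc, hceq⟩ := exists_ratio_hasDerivAt_eq_ratio_slope f f' hgt
      (Continuous.continuousOn (by fun_prop)) (fun u _ => hfd u) g g'
      (Continuous.continuousOn (by fun_prop)) (fun u _ => hgd u)
    have hfη0 : f η₀ = 0 := by simp [hf]
    have hgη0 : g η₀ = 0 := by simp [hg]
    have hceq' : g η * (deriv b c - deriv b η₀) = f η * (2 * (c - η₀)) := by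
      simpa [hfη0, hgη0, hf', hg'] using hceq
    have hη0c : η₀ < c := hc.1
    obtain ⟨d, hd, hdeq⟩ := exists_hasDerivAt_eq_slope (deriv b) (deriv (deriv b)) hη0c
      (Continuous.continuousOn (cont2 hb3)) (fun u _ => (hb2 u).hasDerivAt)
    refine ⟨d, ?_, ?_⟩
    · have h1 : η₀ < d := hd.1
      have h2 : d < c := hd.2
      have h3 : c < η := hc.2
      rw [abs_of_pos (by linarith), abs_of_pos (by linarith)]
      linarith
    · have hcne : c - η₀ ≠ 0 := sub_ne_zero.mpr (ne_of_gt hη0c)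
      have hbc : deriv b c - deriv b η₀ = deriv (deriv b) d * (c - η₀) := by
        have h := (eq_div_iff hcne).mp hdeq
        linear_combination -h
      rw [hbc] at hceq'
      have h2 : (g η * deriv (deriv b) d) * (c - η₀) = (f η * 2) * (c - η₀) := by
        linear_combination hceq'
      have hcancel := mul_right_cancel₀ hcne h2
      simp only [hf, hg] at hcancel ⊢
      linear_combination -hcancel / 2

/-- Strict positivity of the second derivative. -/
lemma bpp_pos (hb3 : ContDiff ℝ 3 b) (hbconv : StrictConvexOn ℝ Set.univ b)
    (hbratio : ∀ η₁ η₂, deriv (deriv b) η₁ ≤ Real.exp (3 * |η₁ - η₂|) * deriv (deriv b) η₂) :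
    ∀ η, 0 < deriv (deriv b) η := by
  have hb1 : Differentiable ℝ b := hb3.differentiable (by norm_num)
  have hb2 : Differentiable ℝ (deriv b) := diff2 hb3
  have hconv : ConvexOn ℝ Set.univ b := hbconv.convexOn
  have h01 : deriv b 0 ≤ slope b 0 1 :=
    hconv.deriv_le_slope (mem_univ 0) (mem_univ 1) one_pos (hb1 0)
  have h12 : slope b 1 2 ≤ deriv b 2 :=
    hconv.slope_le_deriv (mem_univ 1) (mem_univ 2) one_lt_two (hb1 2)
  have hs01 : slope b 0 1 = b 1 - b 0 := by rw [slope_def_field]; ring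
  have hs12 : slope b 1 2 = b 2 - b 1 := by rw [slope_def_field]; ring
  have hmid : b 1 < (1/2 : ℝ) * b 0 + (1/2 : ℝ) * b 2 := by
    have := hbconv.2 (mem_univ (0:ℝ)) (mem_univ (2:ℝ)) (by norm_num)
      (by norm_num : (0:ℝ) < 1/2) (by norm_num : (0:ℝ) < 1/2) (by norm_num)
    simpa using this
  have hlt : deriv b 0 < deriv b 2 := by
    rw [hs01] at h01; rw [hs12] at h12; linarith
  obtain ⟨c, _, hceq⟩ := exists_hasDerivAt_eq_slope (deriv b) (deriv (deriv b))
    (by norm_num : (0:ℝ) < 2) (Continuous.continuousOn hb2.continuous)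
    (fun u _ => (hb2 u).hasDerivAt)
  have hcpos : 0 < deriv (deriv b) c := by
    rw [hceq]; apply div_pos (by linarith) (by norm_num)
  intro η
  have h := hbratio c η
  nlinarith [Real.exp_pos (3 * |c - η|)]

variable {n p : ℕ} (x : Fin n → Fin p → ℝ) (θ₀ : Fin p → ℝ)

lemma ip_pad (S : Finset (Fin p)) (θs : S → ℝ) (i : Fin n) :
    ip x (pad S θs) i = ipS x S θs i := by
  unfold ip ipS
  rw [← Finset.sum_subset (Finset.subset_univ S)]
  · rw [Finset.univ_eq_attach, ← Finset.sum_attach S (fun j => x i j * pad S θs j)]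
    apply Finset.sum_congr rfl
    intro j _
    simp [pad, j.2]
  · intro j _ hj
    simp [pad, hj]

lemma ip_sub (θ θ' : Fin p → ℝ) (i : Fin n) :
    ip x (fun j => θ j - θ' j) i = ip x θ i - ip x θ' i := by
  unfold ip
  rw [← Finset.sum_sub_distrib]
  exact Finset.sum_congr rfl fun j _ => by ring

lemma ipS_combo (S : Finset (Fin p)) (w v : S → ℝ) (t : ℝ) (i : Fin n) :
    ipS x S (fun j => (1 - t) * w j + t * v j) i
      = (1 - t) * ipS x S w i + t * ipS x S v i := by
  unfold ipS
  rw [Finset.mul_sum, Finset.mul_sum, ← Finset.sum_add_distrib]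
  exact Finset.sum_congr rfl fun j _ => by ring

lemma quadF_pad (b : ℝ → ℝ) (S : Finset (Fin p)) (θs : S → ℝ) :
    quadF b x θ₀ (fun j => pad S θs j - θ₀ j)
      = ∑ i, deriv (deriv b) (ip x θ₀ i) * (ipS x S θs i - ip x θ₀ i) ^ 2 := by
  unfold quadF
  apply Finset.sum_congr rfl
  intro i _
  rw [ip_sub x (pad S θs) θ₀ i, ip_pad x S θs i]

/-- quadratic form of a weighted Gram matrix -/
lemma quadform_eq (w : Fin n → ℝ) (S : Finset (Fin p)) (u : S → ℝ) :
    u ⬝ᵥ (Matrix.of fun j k : S => ∑ i, w i * x i j.1 * x i k.1).mulVec u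
      = ∑ i, w i * (ipS x S u i) ^ 2 := by
  unfold ipS
  simp only [dotProduct, Matrix.mulVec, Matrix.of_apply, Finset.sum_mul, Finset.mul_sum]
  trans (∑ y : S, ∑ i, ∑ z : S, u y * (w i * x i y.1 * x i z.1 * u z))
  · exact Finset.sum_congr rfl fun y _ => Finset.sum_comm
  rw [Finset.sum_comm]
  apply Finset.sum_congr rfl
  intro i _
  rw [sq, Finset.sum_mul_sum, Finset.mul_sum]
  apply Finset.sum_congr rfl
  intro jj _
  rw [Finset.mul_sum]
  apply Finset.sum_congr rfl
  intro kk _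
  ring

lemma abs_le_Xmax (hn : 1 ≤ n) (hp : 1 ≤ p) (i : Fin n) (j : Fin p) : |x i j| ≤ Xmax x := by
  have : Nonempty (Fin n) := ⟨⟨0, hn⟩⟩
  have : Nonempty (Fin p) := ⟨⟨0, hp⟩⟩
  calc |x i j| ≤ ⨆ j : Fin p, |x i j| :=
        le_ciSup (f := fun j : Fin p => |x i j|) (Set.Finite.bddAbove (Set.finite_range _)) j
    _ ≤ Xmax x := by
        unfold Xmax
        exact le_ciSup (f := fun i : Fin n => ⨆ j : Fin p, |x i j|)
          (Set.Finite.bddAbove (Set.finite_range _)) i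

/-- ℓ∞-type bound on linear predictors of sparse vectors -/
lemma ip_sq_le (hn : 1 ≤ n) (hp : 1 ≤ p) (θ : Fin p → ℝ) (i : Fin n) :
    (ip x θ i) ^ 2 ≤ max (Xmax x ^ 2) 1 * ((Finset.univ.filter fun j => θ j ≠ 0).card : ℝ)
      * ∑ j, θ j ^ 2 := by
  set T := Finset.univ.filter fun j => θ j ≠ 0 with hT
  have h1 : ip x θ i = ∑ j ∈ T, x i j * θ j := by
    unfold ip
    rw [← Finset.sum_subset (Finset.subset_univ T)]
    intro j _ hj
    simp only [hT, Finset.mem_filter, Finset.mem_univ, true_and, not_not] at hj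
    simp [hj]
  have h2 : (∑ j ∈ T, x i j * θ j) ^ 2 ≤ (T.card : ℝ) * ∑ j ∈ T, (x i j * θ j) ^ 2 :=
    sq_sum_le_card_mul_sum_sq
  have h3 : ∑ j ∈ T, (x i j * θ j) ^ 2 ≤ max (Xmax x ^ 2) 1 * ∑ j, θ j ^ 2 := by
    calc ∑ j ∈ T, (x i j * θ j) ^ 2 ≤ ∑ j ∈ T, max (Xmax x ^ 2) 1 * θ j ^ 2 := by
          apply Finset.sum_le_sum
          intro j _
          rw [mul_pow]
          apply mul_le_mul_of_nonneg_right _ (sq_nonneg _)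
          calc (x i j) ^ 2 ≤ Xmax x ^ 2 := by
                rw [← sq_abs]
                exact pow_le_pow_left₀ (abs_nonneg _) (abs_le_Xmax x hn hp i j) 2
            _ ≤ max (Xmax x ^ 2) 1 := le_max_left _ _
      _ = max (Xmax x ^ 2) 1 * ∑ j ∈ T, θ j ^ 2 := by rw [Finset.mul_sum]
      _ ≤ max (Xmax x ^ 2) 1 * ∑ j, θ j ^ 2 := by
          apply mul_le_mul_of_nonneg_left _ (le_trans zero_le_one (le_max_right _ _))
          exact Finset.sum_le_sum_of_subset_of_nonneg (Finset.subset_univ T)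
            (fun j _ _ => sq_nonneg _)
  calc (ip x θ i) ^ 2 = (∑ j ∈ T, x i j * θ j) ^ 2 := by rw [h1]
    _ ≤ (T.card : ℝ) * (max (Xmax x ^ 2) 1 * ∑ j, θ j ^ 2) := by
        refine le_trans h2 (mul_le_mul_of_nonneg_left h3 (Nat.cast_nonneg _))
    _ = max (Xmax x ^ 2) 1 * (T.card : ℝ) * ∑ j, θ j ^ 2 := by ring

/-- restricted eigenvalue bound -/
lemma re_bound (b : ℝ → ℝ) (hpp : ∀ η, 0 < deriv (deriv b) η) {s : ℝ} (θ : Fin p → ℝ)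
    (hθ : θ ≠ 0)
    (hcard : ((Finset.univ.filter fun j => θ j ≠ 0).card : ℝ) ≤ s) :
    (n : ℝ) * phi2sq b x θ₀ s * ∑ j, θ j ^ 2 ≤ quadF b x θ₀ θ := by
  have hbdd : BddBelow {r : ℝ | ∃ θ : Fin p → ℝ, θ ≠ 0 ∧
      ((Finset.univ.filter fun j => θ j ≠ 0).card : ℝ) ≤ s ∧
      r = quadF b x θ₀ θ / ((n : ℝ) * ∑ j, θ j ^ 2)} := by
    refine ⟨0, fun r hr => ?_⟩
    obtain ⟨θ', -, -, rfl⟩ := hr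
    apply div_nonneg
    · exact Finset.sum_nonneg fun i _ => mul_nonneg (hpp _).le (sq_nonneg _)
    · exact mul_nonneg (Nat.cast_nonneg _) (Finset.sum_nonneg fun j _ => sq_nonneg _)
  have hmem : quadF b x θ₀ θ / ((n : ℝ) * ∑ j, θ j ^ 2) ∈ {r : ℝ | ∃ θ : Fin p → ℝ, θ ≠ 0 ∧
      ((Finset.univ.filter fun j => θ j ≠ 0).card : ℝ) ≤ s ∧
      r = quadF b x θ₀ θ / ((n : ℝ) * ∑ j, θ j ^ 2)} := ⟨θ, hθ, hcard, rfl⟩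
  have hle : phi2sq b x θ₀ s ≤ quadF b x θ₀ θ / ((n : ℝ) * ∑ j, θ j ^ 2) :=
    csInf_le hbdd hmem
  rcases Nat.eq_zero_or_pos n with rfl | hn
  · have h0 : (0:ℝ) ≤ quadF b x θ₀ θ :=
      Finset.sum_nonneg fun i _ => mul_nonneg (hpp _).le (sq_nonneg _)
    simpa using h0
  have hsum : 0 < ∑ j, θ j ^ 2 := by
    have hj : ∃ j, θ j ≠ 0 := by
      by_contra h
      push_neg at h
      exact hθ (funext h)
    obtain ⟨j, hj⟩ := hj
    have h1 := Finset.single_le_sum (f := fun k => θ k ^ 2) (fun k _ => sq_nonneg _)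
      (Finset.mem_univ j)
    have h2 : 0 < θ j ^ 2 := by positivity
    exact lt_of_lt_of_le h2 h1
  have hden : 0 < (n : ℝ) * ∑ j, θ j ^ 2 := by positivity
  calc (n : ℝ) * phi2sq b x θ₀ s * ∑ j, θ j ^ 2
      = phi2sq b x θ₀ s * ((n : ℝ) * ∑ j, θ j ^ 2) := by ring
    _ ≤ (quadF b x θ₀ θ / ((n : ℝ) * ∑ j, θ j ^ 2)) * ((n : ℝ) * ∑ j, θ j ^ 2) :=
        mul_le_mul_of_nonneg_right hle hden.le
    _ = quadF b x θ₀ θ := div_mul_cancel₀ _ hden.ne'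

/-- The Bregman-divergence sum of the submodel. -/
noncomputable def breg (b : ℝ → ℝ) (x : Fin n → Fin p → ℝ) (θ₀ : Fin p → ℝ)
    (S : Finset (Fin p)) (θs : S → ℝ) : ℝ :=
  ∑ i, (b (ipS x S θs i) - b (ip x θ₀ i) - deriv b (ip x θ₀ i) * (ipS x S θs i - ip x θ₀ i))

lemma breg_sub (b : ℝ → ℝ) (S : Finset (Fin p)) (θs θs' : S → ℝ) :
    breg b x θ₀ S θs - breg b x θ₀ S θs' = elik b x θ₀ S θs' - elik b x θ₀ S θs := by
  unfold breg elik
  rw [← Finset.sum_sub_distrib, ← Finset.sum_sub_distrib]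
  exact Finset.sum_congr rfl fun i _ => by ring

lemma breg_bounds (hb3 : ContDiff ℝ 3 b) (hpp : ∀ η, 0 < deriv (deriv b) η)
    (hbratio : ∀ η₁ η₂, deriv (deriv b) η₁ ≤ Real.exp (3 * |η₁ - η₂|) * deriv (deriv b) η₂)
    (S : Finset (Fin p)) (θs : S → ℝ) {δ : ℝ} (hδ : 0 ≤ δ)
    (hd : ∀ i, |ipS x S θs i - ip x θ₀ i| ≤ δ) :
    Real.exp (-(3*δ)) * quadF b x θ₀ (fun j => pad S θs j - θ₀ j) ≤ 2 * breg b x θ₀ S θs ∧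
      2 * breg b x θ₀ S θs ≤ Real.exp (3*δ) * quadF b x θ₀ (fun j => pad S θs j - θ₀ j) := by
  rw [quadF_pad]
  have hterm : ∀ i,
      Real.exp (-(3*δ)) * (deriv (deriv b) (ip x θ₀ i) * (ipS x S θs i - ip x θ₀ i) ^ 2)
        ≤ 2 * (b (ipS x S θs i) - b (ip x θ₀ i)
            - deriv b (ip x θ₀ i) * (ipS x S θs i - ip x θ₀ i)) ∧
      2 * (b (ipS x S θs i) - b (ip x θ₀ i)
            - deriv b (ip x θ₀ i) * (ipS x S θs i - ip x θ₀ i))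
        ≤ Real.exp (3*δ) * (deriv (deriv b) (ip x θ₀ i) * (ipS x S θs i - ip x θ₀ i) ^ 2) := by
    intro i
    set η₀ := ip x θ₀ i
    set η := ipS x S θs i
    obtain ⟨d, hdd, heq⟩ := bregman_rep hb3 η₀ η
    have habs : |d - η₀| ≤ δ := le_trans hdd (hd i)
    have h2D : 2 * (b η - b η₀ - deriv b η₀ * (η - η₀))
        = deriv (deriv b) d * (η - η₀) ^ 2 := by
      rw [heq]; ring
    have e1 : Real.exp (-(3*δ)) * Real.exp (3*δ) = 1 := by
      rw [← Real.exp_add]; norm_num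
    constructor
    · have hlow : deriv (deriv b) η₀ ≤ Real.exp (3*δ) * deriv (deriv b) d := by
        calc deriv (deriv b) η₀ ≤ Real.exp (3 * |η₀ - d|) * deriv (deriv b) d := hbratio η₀ d
          _ ≤ Real.exp (3*δ) * deriv (deriv b) d := by
              apply mul_le_mul_of_nonneg_right _ (hpp d).le
              apply Real.exp_le_exp.mpr
              rw [abs_sub_comm] at habs
              linarith
      have h6 := mul_le_mul_of_nonneg_left hlow (Real.exp_nonneg (-(3*δ)))
      rw [← mul_assoc, e1, one_mul] at h6
      rw [h2D]
      calc Real.exp (-(3*δ)) * (deriv (deriv b) η₀ * (η - η₀) ^ 2)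
          = (Real.exp (-(3*δ)) * deriv (deriv b) η₀) * (η - η₀) ^ 2 := by ring
        _ ≤ deriv (deriv b) d * (η - η₀) ^ 2 :=
            mul_le_mul_of_nonneg_right h6 (sq_nonneg _)
    · have hup : deriv (deriv b) d ≤ Real.exp (3*δ) * deriv (deriv b) η₀ := by
        calc deriv (deriv b) d ≤ Real.exp (3 * |d - η₀|) * deriv (deriv b) η₀ := hbratio d η₀
          _ ≤ Real.exp (3*δ) * deriv (deriv b) η₀ := by
              apply mul_le_mul_of_nonneg_right _ (hpp η₀).le
              apply Real.exp_le_exp.mpr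
              linarith
      rw [h2D]
      calc deriv (deriv b) d * (η - η₀) ^ 2
          ≤ (Real.exp (3*δ) * deriv (deriv b) η₀) * (η - η₀) ^ 2 :=
            mul_le_mul_of_nonneg_right hup (sq_nonneg _)
        _ = Real.exp (3*δ) * (deriv (deriv b) η₀ * (η - η₀) ^ 2) := by ring
  constructor
  · unfold breg
    rw [Finset.mul_sum, Finset.mul_sum]
    exact Finset.sum_le_sum fun i _ => (hterm i).1
  · unfold breg
    rw [Finset.mul_sum, Finset.mul_sum]
    exact Finset.sum_le_sum fun i _ => (hterm i).2

lemma elik_segment (hbconv : StrictConvexOn ℝ Set.univ b) (S : Finset (Fin p))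
    (w v : S → ℝ) (t : ℝ) (ht0 : 0 ≤ t) (ht1 : t ≤ 1) :
    (1 - t) * elik b x θ₀ S w + t * elik b x θ₀ S v
      ≤ elik b x θ₀ S (fun j => (1 - t) * w j + t * v j) := by
  unfold elik
  rw [Finset.mul_sum, Finset.mul_sum, ← Finset.sum_add_distrib]
  apply Finset.sum_le_sum
  intro i _
  rw [ipS_combo]
  have hcv := hbconv.convexOn.2 (Set.mem_univ (ipS x S w i)) (Set.mem_univ (ipS x S v i))
    (by linarith : (0:ℝ) ≤ 1 - t) ht0 (by ring)
  simp only [smul_eq_mul] at hcv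
  nlinarith [hcv]

end Stmt4Aux

namespace Stmt4Aux2

lemma conj_quad {m : Type*} [Fintype m] (R A : Matrix m m ℝ) (hsym : R.transpose = R)
    (u : m → ℝ) :
    u ⬝ᵥ (R * A * R).mulVec u = (R.mulVec u) ⬝ᵥ A.mulVec (R.mulVec u) := by
  rw [← Matrix.mulVec_mulVec, ← Matrix.mulVec_mulVec]
  rw [Matrix.dotProduct_mulVec]
  have h2 : u ᵥ* R = R *ᵥ u := by
    conv_lhs => rw [← hsym]
    exact Matrix.vecMul_transpose R u
  rw [h2]

end Stmt4Aux2


set_option maxHeartbeats 2000000 in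
/-- misspecification on `𝒮_{Θ_n}`.  The inverse square roots
`F^{-1/2}`, `V^{-1/2}` are encoded as the (unique) positive semidefinite matrices `RF`, `RV`
with `RF·F·RF = 1`, `RV·V·RV = 1`. -/
theorem stmt_4
    (n p : ℕ) (hn : 1 ≤ n) (hp : 3 ≤ p)
    (x : Fin n → Fin p → ℝ) (θ₀ : Fin p → ℝ) (hθ₀ : θ₀ ≠ 0)
    -- the cumulant function
    (b : ℝ → ℝ) (hb3 : ContDiff ℝ 3 b) (hbconv : StrictConvexOn ℝ Set.univ b)
    (hb3bound : ∀ η, |deriv (deriv (deriv b)) η| ≤ deriv (deriv b) η)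
    (hbratio : ∀ η₁ η₂, deriv (deriv b) η₁ ≤ Real.exp (3 * |η₁ - η₂|) * deriv (deriv b) η₂)
    -- the constants
    (Kdim Ktheta : ℝ) (hKdim : 1 < Kdim) (hKtheta : 0 < Ktheta)
    -- `s₀ = |S₀|`
    (s₀ : ℕ) (hs₀ : s₀ = (Finset.univ.filter fun j => θ₀ j ≠ 0).card)
    -- the maximizers `θ*_S`
    (θstar : (S : Finset (Fin p)) → (S → ℝ))
    (hθstar : ∀ S : Finset (Fin p), inSTheta b x θ₀ Kdim Ktheta S →
      ∀ θs : S → ℝ, elik b x θ₀ S θs ≤ elik b x θ₀ S (θstar S))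
    -- `φ₂(s̃_n ; W₀) > 0` and the sample-size condition
    (hphi : 0 < phi2sq b x θ₀ ((Kdim + 1) * (s₀ : ℝ)))
    (hsample : 200 * Ktheta * (Kdim + 1) / phi2sq b x θ₀ ((Kdim + 1) * (s₀ : ℝ)) *
        max (Xmax x ^ 2) 1 * (s₀ : ℝ) ^ 2 * Real.log p ≤ (n : ℝ)) :
    ∀ S : Finset (Fin p), inSTheta b x θ₀ Kdim Ktheta S →
      (quadF b x θ₀ (fun j => pad S (θstar S) j - θ₀ j)
          ≤ 8 * Ktheta * (s₀ : ℝ) * Real.log p) ∧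
      (Vmat b x θ₀ S).PosDef ∧ (Fmat b x S (θstar S)).PosDef ∧
      (∀ RF : Matrix S S ℝ, RF.PosSemidef → RF * Fmat b x S (θstar S) * RF = 1 →
        lamMax (RF * Vmat b x θ₀ S * RF) ≤ 2) ∧
      (∀ RV : Matrix S S ℝ, RV.PosSemidef → RV * Vmat b x θ₀ S * RV = 1 →
        lamMax (RV * Fmat b x S (θstar S) * RV) ≤ 2) := by
  intro S hS
  have hS' := hS
  obtain ⟨hSne, hScard, w, hw⟩ := hS'
  have hpp : ∀ η, 0 < deriv (deriv b) η := Stmt4Aux.bpp_pos hb3 hbconv hbratio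
  have hp1 : 1 ≤ p := le_trans (by norm_num) hp
  have hcast : ((Finset.univ.filter fun j => θ₀ j ≠ 0).card : ℝ) = (s₀ : ℝ) := by rw [hs₀]
  rw [hcast] at hScard hw
  have hs₀1 : 1 ≤ s₀ := by
    rw [hs₀]
    have hj : ∃ j, θ₀ j ≠ 0 := by
      by_contra h; push_neg at h; exact hθ₀ (funext h)
    obtain ⟨j, hj⟩ := hj
    exact Finset.card_pos.mpr ⟨j, Finset.mem_filter.mpr ⟨Finset.mem_univ j, hj⟩⟩
  have hs₀R : (1:ℝ) ≤ (s₀:ℝ) := by exact_mod_cast hs₀1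
  have hpR : (3:ℝ) ≤ (p:ℝ) := by exact_mod_cast hp
  have hlogp : 0 < Real.log p := Real.log_pos (by linarith)
  set M := max (Xmax x ^ 2) 1 with hM
  have hM1 : (1:ℝ) ≤ M := le_max_right _ _
  set φ := phi2sq b x θ₀ ((Kdim + 1) * (s₀:ℝ)) with hφ
  set r2 := Ktheta * (s₀:ℝ) * Real.log p with hr2def
  have hr2 : 0 < r2 := mul_pos (mul_pos hKtheta (by linarith)) hlogp
  have hKd0 : (0:ℝ) < Kdim + 1 := by linarith
  have hnR : (1:ℝ) ≤ (n:ℝ) := by exact_mod_cast hn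
  have hkey : 200 * Ktheta * (Kdim + 1) * M * (s₀:ℝ)^2 * Real.log p ≤ (n:ℝ) * φ := by
    have h := mul_le_mul_of_nonneg_right hsample hphi.le
    calc 200 * Ktheta * (Kdim + 1) * M * (s₀:ℝ)^2 * Real.log p
        = 200 * Ktheta * (Kdim + 1) / φ * M * (s₀:ℝ)^2 * Real.log p * φ := by
          field_simp
      _ ≤ (n:ℝ) * φ := h
  have hnφ : 0 < (n:ℝ) * φ := mul_pos (by linarith) hphi
  -- the key δ-control lemma
  have hdelta : ∀ (θs : S → ℝ) (c : ℝ), 0 ≤ c →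
      quadF b x θ₀ (fun j => pad S θs j - θ₀ j) ≤ c * r2 →
      ∀ i, (ipS x S θs i - ip x θ₀ i)^2 ≤ c / 200 := by
    intro θs c hc hq i
    set Δ : Fin p → ℝ := fun j => pad S θs j - θ₀ j with hΔdef
    have hipΔ : ip x Δ i = ipS x S θs i - ip x θ₀ i := by
      rw [hΔdef, Stmt4Aux.ip_sub, Stmt4Aux.ip_pad]
    by_cases hΔ0 : Δ = 0
    · rw [← hipΔ, hΔ0]
      have : ip x (0 : Fin p → ℝ) i = 0 := by simp [ip]
      rw [this]
      simpa using div_nonneg hc (by norm_num : (0:ℝ) ≤ 200)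
    · have hsub : (Finset.univ.filter fun j => Δ j ≠ 0)
          ⊆ S ∪ (Finset.univ.filter fun j => θ₀ j ≠ 0) := by
        intro j hj
        simp only [Finset.mem_filter, Finset.mem_univ, true_and] at hj
        rw [Finset.mem_union]
        by_contra hcon
        push_neg at hcon
        obtain ⟨h1, h2⟩ := hcon
        simp only [Finset.mem_filter, Finset.mem_univ, true_and, not_not] at h2
        exact hj (by simp [hΔdef, pad, h1, h2])
      have hcard : ((Finset.univ.filter fun j => Δ j ≠ 0).card : ℝ) ≤ (Kdim + 1) * (s₀:ℝ) := by
        calc ((Finset.univ.filter fun j => Δ j ≠ 0).card : ℝ)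
            ≤ ((S ∪ (Finset.univ.filter fun j => θ₀ j ≠ 0)).card : ℝ) := by
              exact_mod_cast Finset.card_le_card hsub
          _ ≤ (S.card : ℝ) + (s₀:ℝ) := by
              rw [← hcast]
              exact_mod_cast Finset.card_union_le _ _
          _ ≤ Kdim * (s₀:ℝ) + (s₀:ℝ) := by linarith
          _ = (Kdim + 1) * (s₀:ℝ) := by ring
      have hre := Stmt4Aux.re_bound x θ₀ b hpp Δ hΔ0 hcard
      have hip := Stmt4Aux.ip_sq_le x hn hp1 Δ i
      have hSig : (0:ℝ) ≤ ∑ j, Δ j ^ 2 := Finset.sum_nonneg fun j _ => sq_nonneg _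
      have hMnn : (0:ℝ) ≤ M := by linarith
      have hip2 : (ip x Δ i)^2 ≤ M * ((Kdim+1) * (s₀:ℝ)) * ∑ j, Δ j ^ 2 := by
        refine le_trans hip ?_
        apply mul_le_mul_of_nonneg_right _ hSig
        exact mul_le_mul_of_nonneg_left hcard hMnn
      have hfac : (0:ℝ) ≤ M * ((Kdim+1)*(s₀:ℝ)) :=
        mul_nonneg hMnn (mul_nonneg hKd0.le (by positivity))
      have h3 : (ip x Δ i)^2 * ((n:ℝ) * φ) ≤ M * ((Kdim+1)*(s₀:ℝ)) * (c * r2) := by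
        calc (ip x Δ i)^2 * ((n:ℝ)*φ)
            ≤ (M * ((Kdim+1)*(s₀:ℝ)) * ∑ j, Δ j ^ 2) * ((n:ℝ)*φ) :=
              mul_le_mul_of_nonneg_right hip2 hnφ.le
          _ = M * ((Kdim+1)*(s₀:ℝ)) * ((n:ℝ) * φ * ∑ j, Δ j ^ 2) := by ring
          _ ≤ M * ((Kdim+1)*(s₀:ℝ)) * (c * r2) :=
              mul_le_mul_of_nonneg_left (le_trans hre hq) hfac
      have h4 : M * ((Kdim+1)*(s₀:ℝ)) * (c * r2) ≤ (c/200) * ((n:ℝ)*φ) := by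
        have heq : M * ((Kdim+1)*(s₀:ℝ)) * (c * r2)
            = (c/200) * (200 * Ktheta * (Kdim + 1) * M * (s₀:ℝ)^2 * Real.log p) := by
          rw [hr2def]; ring
        rw [heq]
        exact mul_le_mul_of_nonneg_left hkey (by positivity)
      rw [← hipΔ]
      exact le_of_mul_le_mul_right (le_trans h3 h4) hnφ
  -- bound for the pilot point w
  have hwle : quadF b x θ₀ (fun j => pad S w j - θ₀ j) ≤ 1 * r2 := by
    rw [one_mul, hr2def]; exact hw
  have hδw : ∀ i, |ipS x S w i - ip x θ₀ i| ≤ 1/14 := by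
    intro i
    have h := hdelta w 1 zero_le_one hwle i
    nlinarith [abs_nonneg (ipS x S w i - ip x θ₀ i), sq_abs (ipS x S w i - ip x θ₀ i),
      sq_nonneg (|ipS x S w i - ip x θ₀ i| - 1/14)]
  have hBw := (Stmt4Aux.breg_bounds x θ₀ hb3 hpp hbratio S w
    (by norm_num : (0:ℝ) ≤ 1/14) hδw).2
  have hBw2 : 2 * Stmt4Aux.breg b x θ₀ S w ≤ Real.exp (3*(1/14)) * r2 := by
    refine le_trans hBw ?_
    apply mul_le_mul_of_nonneg_left _ (Real.exp_nonneg _)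
    linarith
  -- claim (i)
  have hstar : quadF b x θ₀ (fun j => pad S (θstar S) j - θ₀ j) ≤ 8 * r2 := by
    by_contra hcon
    push_neg at hcon
    set g : ℝ → ℝ := fun t => ∑ i, deriv (deriv b) (ip x θ₀ i) *
      ((1-t) * (ipS x S w i - ip x θ₀ i) + t * (ipS x S (θstar S) i - ip x θ₀ i))^2 with hgdef
    have hgq : ∀ t, g t = quadF b x θ₀
        (fun j => pad S (fun j => (1-t) * w j + t * θstar S j) j - θ₀ j) := by
      intro t
      rw [Stmt4Aux.quadF_pad]
      apply Finset.sum_congr rfl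
      intro i _
      rw [Stmt4Aux.ipS_combo]
      ring
    have hg0 : g 0 = quadF b x θ₀ (fun j => pad S w j - θ₀ j) := by
      rw [Stmt4Aux.quadF_pad]
      apply Finset.sum_congr rfl
      intro i _
      ring
    have hg1 : g 1 = quadF b x θ₀ (fun j => pad S (θstar S) j - θ₀ j) := by
      rw [Stmt4Aux.quadF_pad]
      apply Finset.sum_congr rfl
      intro i _
      ring
    have hgc : Continuous g := by
      apply continuous_finset_sum
      intro i _
      fun_prop
    have hmem8 : (8*r2) ∈ Set.Icc (g 0) (g 1) := by
      constructor
      · rw [hg0]; linarith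
      · rw [hg1]; linarith
    obtain ⟨t, ht, hgt⟩ := intermediate_value_Icc (by norm_num : (0:ℝ) ≤ 1)
      hgc.continuousOn hmem8
    set θt : S → ℝ := fun j => (1-t) * w j + t * θstar S j with hθt
    have hqt : quadF b x θ₀ (fun j => pad S θt j - θ₀ j) = 8*r2 := by
      rw [← hgq t, hgt]
    have hδt : ∀ i, |ipS x S θt i - ip x θ₀ i| ≤ 1/5 := by
      intro i
      have h := hdelta θt 8 (by norm_num) (le_of_eq hqt) i
      nlinarith [abs_nonneg (ipS x S θt i - ip x θ₀ i), sq_abs (ipS x S θt i - ip x θ₀ i),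
        sq_nonneg (|ipS x S θt i - ip x θ₀ i| - 1/5)]
    have hel : elik b x θ₀ S w ≤ elik b x θ₀ S θt := by
      have hseg := Stmt4Aux.elik_segment x θ₀ hbconv S w (θstar S) t ht.1 ht.2
      have hmax := hθstar S hS w
      nlinarith [mul_le_mul_of_nonneg_left hmax ht.1]
    have hbregle : Stmt4Aux.breg b x θ₀ S θt ≤ Stmt4Aux.breg b x θ₀ S w := by
      have h := Stmt4Aux.breg_sub x θ₀ b S θt w
      linarith
    have hlowt := (Stmt4Aux.breg_bounds x θ₀ hb3 hpp hbratio S θt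
      (by norm_num : (0:ℝ) ≤ 1/5) hδt).1
    rw [hqt] at hlowt
    have hchain : Real.exp (-(3*(1/5))) * (8*r2) ≤ Real.exp (3*(1/14)) * r2 := by
      linarith
    have hexp8 : Real.exp (3*(1/5) + 3*(1/14)) < 8 := by
      have h1 : (3*(1/5) + 3*(1/14) : ℝ) < 3 * Real.log 2 := by
        nlinarith [Real.log_two_gt_d9]
      calc Real.exp (3*(1/5)+3*(1/14)) < Real.exp (3 * Real.log 2) := Real.exp_lt_exp.mpr h1
        _ = 8 := by
            rw [show (3:ℝ) * Real.log 2 = Real.log 2 + (Real.log 2 + Real.log 2) by ring,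
              Real.exp_add, Real.exp_add, Real.exp_log two_pos]
            norm_num
    have hfinal : 8 * r2 ≤ Real.exp (3*(1/5)) * Real.exp (3*(1/14)) * r2 := by
      have h := mul_le_mul_of_nonneg_left hchain (Real.exp_nonneg (3*(1/5)))
      calc 8 * r2 = Real.exp (3*(1/5)) * Real.exp (-(3*(1/5))) * (8 * r2) := by
            rw [← Real.exp_add]
            norm_num
        _ = Real.exp (3*(1/5)) * (Real.exp (-(3*(1/5))) * (8 * r2)) := by ring
        _ ≤ Real.exp (3*(1/5)) * (Real.exp (3*(1/14)) * r2) := h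
        _ = Real.exp (3*(1/5)) * Real.exp (3*(1/14)) * r2 := by ring
    rw [← Real.exp_add] at hfinal
    nlinarith
  -- consequences of claim (i)
  have hδs : ∀ i, |ipS x S (θstar S) i - ip x θ₀ i| ≤ 1/5 := by
    intro i
    have h := hdelta (θstar S) 8 (by norm_num) hstar i
    nlinarith [abs_nonneg (ipS x S (θstar S) i - ip x θ₀ i),
      sq_abs (ipS x S (θstar S) i - ip x θ₀ i),
      sq_nonneg (|ipS x S (θstar S) i - ip x θ₀ i| - 1/5)]
  have hexp2 : Real.exp (3 * (1/5 : ℝ)) ≤ 2 := by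
    have h1 : (3 * (1/5:ℝ)) ≤ Real.log 2 := by nlinarith [Real.log_two_gt_d9]
    calc Real.exp (3*(1/5:ℝ)) ≤ Real.exp (Real.log 2) := Real.exp_le_exp.mpr h1
      _ = 2 := Real.exp_log two_pos
  have hrat : ∀ i, deriv (deriv b) (ipS x S (θstar S) i) ≤ 2 * deriv (deriv b) (ip x θ₀ i)
      ∧ deriv (deriv b) (ip x θ₀ i) ≤ 2 * deriv (deriv b) (ipS x S (θstar S) i) := by
    intro i
    have habs := hδs i
    constructor
    · calc deriv (deriv b) (ipS x S (θstar S) i)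
          ≤ Real.exp (3 * |ipS x S (θstar S) i - ip x θ₀ i|) * deriv (deriv b) (ip x θ₀ i) :=
            hbratio _ _
        _ ≤ Real.exp (3*(1/5)) * deriv (deriv b) (ip x θ₀ i) := by
            apply mul_le_mul_of_nonneg_right _ (hpp _).le
            apply Real.exp_le_exp.mpr
            linarith
        _ ≤ 2 * deriv (deriv b) (ip x θ₀ i) :=
            mul_le_mul_of_nonneg_right hexp2 (hpp _).le
    · calc deriv (deriv b) (ip x θ₀ i)
          ≤ Real.exp (3 * |ip x θ₀ i - ipS x S (θstar S) i|) * deriv (deriv b) (ipS x S (θstar S) i) :=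
            hbratio _ _
        _ ≤ Real.exp (3*(1/5)) * deriv (deriv b) (ipS x S (θstar S) i) := by
            apply mul_le_mul_of_nonneg_right _ (hpp _).le
            apply Real.exp_le_exp.mpr
            rw [abs_sub_comm]
            linarith
        _ ≤ 2 * deriv (deriv b) (ipS x S (θstar S) i) :=
            mul_le_mul_of_nonneg_right hexp2 (hpp _).le
  -- quadratic forms
  have hqV : ∀ u : S → ℝ, u ⬝ᵥ (Vmat b x θ₀ S).mulVec u
      = ∑ i, deriv (deriv b) (ip x θ₀ i) * (ipS x S u i)^2 := fun u =>
    Stmt4Aux.quadform_eq x (fun i => deriv (deriv b) (ip x θ₀ i)) S u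
  have hqF : ∀ u : S → ℝ, u ⬝ᵥ (Fmat b x S (θstar S)).mulVec u
      = ∑ i, deriv (deriv b) (ipS x S (θstar S) i) * (ipS x S u i)^2 := fun u =>
    Stmt4Aux.quadform_eq x (fun i => deriv (deriv b) (ipS x S (θstar S) i)) S u
  have hFV : ∀ u : S → ℝ, u ⬝ᵥ (Fmat b x S (θstar S)).mulVec u
      ≤ 2 * (u ⬝ᵥ (Vmat b x θ₀ S).mulVec u) := by
    intro u
    rw [hqF u, hqV u, Finset.mul_sum]
    apply Finset.sum_le_sum
    intro i _
    have h := (hrat i).1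
    nlinarith [sq_nonneg (ipS x S u i)]
  have hVF : ∀ u : S → ℝ, u ⬝ᵥ (Vmat b x θ₀ S).mulVec u
      ≤ 2 * (u ⬝ᵥ (Fmat b x S (θstar S)).mulVec u) := by
    intro u
    rw [hqF u, hqV u, Finset.mul_sum]
    apply Finset.sum_le_sum
    intro i _
    have h := (hrat i).2
    nlinarith [sq_nonneg (ipS x S u i)]
  -- positivity of the V-quadratic form
  have hVquad : ∀ u : S → ℝ, u ≠ 0 → 0 < u ⬝ᵥ (Vmat b x θ₀ S).mulVec u := by
    intro u hu
    obtain ⟨j, hj⟩ : ∃ j : S, u j ≠ 0 := by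
      by_contra h; push_neg at h; exact hu (funext h)
    have hpadval : pad S u j.1 = u j := by
      simp only [pad, j.2, dif_pos]
    have hpadne : pad S u ≠ 0 := by
      intro h
      apply hj
      rw [← hpadval, h]
      rfl
    have hsupp : (Finset.univ.filter fun k => pad S u k ≠ 0) ⊆ S := by
      intro k hk
      simp only [Finset.mem_filter, Finset.mem_univ, true_and] at hk
      by_contra hkS
      exact hk (by simp [pad, hkS])
    have hcardp : ((Finset.univ.filter fun k => pad S u k ≠ 0).card : ℝ)
        ≤ (Kdim + 1) * (s₀:ℝ) := by
      calc ((Finset.univ.filter fun k => pad S u k ≠ 0).card : ℝ) ≤ (S.card : ℝ) := by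
            exact_mod_cast Finset.card_le_card hsupp
        _ ≤ Kdim * (s₀:ℝ) := hScard
        _ ≤ (Kdim + 1) * (s₀:ℝ) := by nlinarith
    have hre := Stmt4Aux.re_bound x θ₀ b hpp (pad S u) hpadne hcardp
    have hqeq : u ⬝ᵥ (Vmat b x θ₀ S).mulVec u = quadF b x θ₀ (pad S u) := by
      rw [hqV u]
      unfold quadF
      exact Finset.sum_congr rfl fun i _ => by rw [Stmt4Aux.ip_pad]
    have hSigpos : 0 < ∑ k, pad S u k ^ 2 := by
      have h1 := Finset.single_le_sum (f := fun k => pad S u k ^ 2)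
        (fun k _ => sq_nonneg _) (Finset.mem_univ j.1)
      have h2 : 0 < pad S u j.1 ^ 2 := by
        rw [hpadval]; positivity
      exact lt_of_lt_of_le h2 h1
    rw [hqeq]
    calc (0:ℝ) < (n:ℝ) * φ * ∑ k, pad S u k ^ 2 := by positivity
      _ ≤ quadF b x θ₀ (pad S u) := hre
  have hstarify : ∀ u : S → ℝ, star u = u := fun u => funext fun j => star_trivial _
  have hVherm : (Vmat b x θ₀ S).IsHermitian := by
    ext j k
    simp only [Matrix.conjTranspose_apply, Vmat, Matrix.of_apply, star_trivial]
    exact Finset.sum_congr rfl fun i _ => by ring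
  have hFherm : (Fmat b x S (θstar S)).IsHermitian := by
    ext j k
    simp only [Matrix.conjTranspose_apply, Fmat, Matrix.of_apply, star_trivial]
    exact Finset.sum_congr rfl fun i _ => by ring
  have hVpos : (Vmat b x θ₀ S).PosDef := by
    refine Matrix.PosDef.of_dotProduct_mulVec_pos hVherm ?_; intro u hu
    rw [hstarify u]
    exact hVquad u hu
  have hFpos : (Fmat b x S (θstar S)).PosDef := by
    refine Matrix.PosDef.of_dotProduct_mulVec_pos hFherm ?_; intro u hu
    rw [hstarify u]
    have h1 := hVF u
    have h2 := hVquad u hu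
    linarith
  refine ⟨?_, hVpos, hFpos, ?_, ?_⟩
  · calc quadF b x θ₀ (fun j => pad S (θstar S) j - θ₀ j) ≤ 8 * r2 := hstar
      _ = 8 * Ktheta * (s₀:ℝ) * Real.log p := by rw [hr2def]; ring
  · -- lamMax (RF V RF) ≤ 2
    intro RF hRFpsd hRFeq
    apply Real.sSup_le _ (by norm_num)
    rintro r ⟨u, hu1, rfl⟩
    have hsym : RF.transpose = RF := by
      have h := hRFpsd.1
      ext j k
      calc RF.transpose j k = RF k j := rfl
        _ = star (RF k j) := (star_trivial _).symm
        _ = RF.conjTranspose j k := rfl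
        _ = RF j k := by rw [h]
    calc u ⬝ᵥ (RF * Vmat b x θ₀ S * RF).mulVec u
        = (RF.mulVec u) ⬝ᵥ (Vmat b x θ₀ S).mulVec (RF.mulVec u) :=
          Stmt4Aux2.conj_quad RF _ hsym u
      _ ≤ 2 * ((RF.mulVec u) ⬝ᵥ (Fmat b x S (θstar S)).mulVec (RF.mulVec u)) :=
          hVF _
      _ = 2 * (u ⬝ᵥ (RF * Fmat b x S (θstar S) * RF).mulVec u) := by
          rw [Stmt4Aux2.conj_quad RF _ hsym u]
      _ = 2 * (u ⬝ᵥ (1 : Matrix S S ℝ).mulVec u) := by rw [hRFeq]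
      _ = 2 * ∑ i, u i ^ 2 := by
          rw [Matrix.one_mulVec]
          simp [dotProduct, sq]
      _ = 2 := by rw [hu1]; norm_num
  · -- lamMax (RV F RV) ≤ 2
    intro RV hRVpsd hRVeq
    apply Real.sSup_le _ (by norm_num)
    rintro r ⟨u, hu1, rfl⟩
    have hsym : RV.transpose = RV := by
      have h := hRVpsd.1
      ext j k
      calc RV.transpose j k = RV k j := rfl
        _ = star (RV k j) := (star_trivial _).symm
        _ = RV.conjTranspose j k := rfl
        _ = RV j k := by rw [h]
    calc u ⬝ᵥ (RV * Fmat b x S (θstar S) * RV).mulVec u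
        = (RV.mulVec u) ⬝ᵥ (Fmat b x S (θstar S)).mulVec (RV.mulVec u) :=
          Stmt4Aux2.conj_quad RV _ hsym u
      _ ≤ 2 * ((RV.mulVec u) ⬝ᵥ (Vmat b x θ₀ S).mulVec (RV.mulVec u)) :=
          hFV _
      _ = 2 * (u ⬝ᵥ (RV * Vmat b x θ₀ S * RV).mulVec u) := by
          rw [Stmt4Aux2.conj_quad RV _ hsym u]
      _ = 2 * (u ⬝ᵥ (1 : Matrix S S ℝ).mulVec u) := by rw [hRVeq]
      _ = 2 * ∑ i, u i ^ 2 := by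
          rw [Matrix.one_mulVec]
          simp [dotProduct, sq]
      _ = 2 := by rw [hu1]; norm_num
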